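/- Let ξ_β (β ∈ ℕ^m, |β| ≤ d) be independent standard Gaussian vectors γ_β ∼ N(0, 1_k), and define X̃_d(u) = Σ_{|β|≤d} binom(d,β)^{1/2} γ_β (u/√d)^β and X̃_∞(u) = Σ_β (1/β!)^{1/2} γ_β u^β. Then for each fixed u with |u| ≤ 1, X̃_d(u) → X̃_∞(u) almost surely as d → ∞, since the coefficient binom(d,β)^{1/2} d^{-|β|/2} → (1/β!)^{1/2} for each β and the tails are uniformly summably small. -/

import Mathlib

open MeasureTheory ProbabilityTheory Finset Filter
open scoped NNReal

lemma aux_sqrt_prod {ι : Type*} (s : Finset ι) (f : ι → ℝ) (hf : ∀ i ∈ s, 0 ≤ f i) :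
    Real.sqrt (∏ i ∈ s, f i) = ∏ i ∈ s, Real.sqrt (f i) := by
  induction s using Finset.cons_induction with
  | empty => simp
  | cons a s ha ih =>
    rw [Finset.prod_cons, Finset.prod_cons,
      Real.sqrt_mul (hf a (Finset.mem_cons_self a s)), ih (fun i hi => hf i (Finset.mem_cons_of_mem hi))]

lemma aux_sqrt_pow (a : ℝ) (ha : 0 ≤ a) (n : ℕ) : Real.sqrt (a ^ n) = Real.sqrt a ^ n := by
  induction n with
  | zero => simp
  | succ n ih => rw [pow_succ, pow_succ, Real.sqrt_mul (pow_nonneg ha n), ih]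

lemma aux_two_pow_le (n : ℕ) : 2 ^ n ≤ 2 * n.factorial := by
  induction n with
  | zero => norm_num
  | succ n ih =>
    rcases Nat.eq_zero_or_pos n with rfl | hn
    · norm_num [Nat.factorial]
    · calc 2 ^ (n + 1) = 2 ^ n * 2 := by ring
        _ ≤ 2 * n.factorial * 2 := Nat.mul_le_mul_right _ ih
        _ ≤ 2 * n.factorial * (n + 1) := Nat.mul_le_mul_left _ (by omega)
        _ = 2 * (n + 1).factorial := by rw [Nat.factorial_succ]; ring

lemma aux_summable_nat : Summable (fun n : ℕ => Real.sqrt (1 / (n.factorial : ℝ))) := by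
  have hr : Real.sqrt 2⁻¹ < 1 := by
    rw [show (1:ℝ) = Real.sqrt 1 by simp]
    exact Real.sqrt_lt_sqrt (by norm_num) (by norm_num)
  refine Summable.of_nonneg_of_le (fun n => Real.sqrt_nonneg _) (fun n => ?_)
    ((summable_geometric_of_lt_one (Real.sqrt_nonneg _) hr).mul_left (Real.sqrt 2))
  have h1 : (1 : ℝ) / n.factorial ≤ 2 * 2⁻¹ ^ n := by
    rw [inv_pow, ← div_eq_mul_inv, div_le_div_iff₀ (by positivity) (by positivity)]
    calc (1:ℝ) * 2 ^ n = 2 ^ n := by ring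
      _ ≤ 2 * n.factorial := by exact_mod_cast aux_two_pow_le n
  calc Real.sqrt (1 / n.factorial) ≤ Real.sqrt (2 * 2⁻¹ ^ n) := Real.sqrt_le_sqrt h1
    _ = Real.sqrt 2 * Real.sqrt 2⁻¹ ^ n := by
        rw [Real.sqrt_mul (by norm_num), aux_sqrt_pow _ (by norm_num)]

lemma aux_summable_multi (m : ℕ) :
    Summable (fun β : Fin m → ℕ => ∏ l, Real.sqrt (1 / ((β l).factorial : ℝ))) := by
  induction m with
  | zero => exact (hasSum_fintype _).summable
  | succ n ih =>
    have h := aux_summable_nat.mul_of_nonneg ih (fun _ => Real.sqrt_nonneg _)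
      (fun β => Finset.prod_nonneg (fun _ _ => Real.sqrt_nonneg _))
    rw [← (Fin.consEquiv (fun _ : Fin (n+1) => ℕ)).summable_iff]
    refine h.congr (fun p => ?_)
    simp [Fin.consEquiv, Function.comp, Fin.prod_univ_succ, mul_comm]

lemma aux_gauss_int : Integrable (fun x : ℝ => x) (gaussianReal 0 1) := by
  rw [gaussianReal_of_var_ne_zero _ one_ne_zero,
    integrable_withDensity_iff (measurable_gaussianPDF _ _)
      (Filter.Eventually.of_forall fun x => ENNReal.ofReal_lt_top)]
  have h2 : Integrable (fun x : ℝ => x ^ (1:ℝ) * Real.exp (-(2⁻¹:ℝ) * x ^ 2)) volume :=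
    integrable_rpow_mul_exp_neg_mul_sq (by norm_num) (by norm_num)
  simp_rw [Real.rpow_one] at h2
  refine (h2.const_mul ((Real.sqrt (2 * Real.pi))⁻¹)).congr (Filter.Eventually.of_forall fun x => ?_)
  beta_reduce
  rw [show gaussianPDF 0 1 x = ENNReal.ofReal (gaussianPDFReal 0 1 x) from rfl,
    ENNReal.toReal_ofReal (gaussianPDFReal_nonneg _ _ _), gaussianPDFReal]
  push_cast
  ring_nf

lemma aux_coef_tendsto (j : ℕ) :
    Tendsto (fun d : ℕ => ((d.descFactorial j : ℝ)) / (d : ℝ) ^ j) atTop (nhds 1) := by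
  have h : ∀ i ∈ Finset.range j, Tendsto (fun d : ℕ => (((d - i : ℕ) : ℝ)) / (d : ℝ))
      atTop (nhds 1) := by
    intro i _
    have h0 : Tendsto (fun d : ℕ => 1 - (i : ℝ) / d) atTop (nhds 1) := by
      simpa using tendsto_const_nhds.sub (tendsto_const_div_atTop_nhds_zero_nat (i:ℝ))
    refine h0.congr' ?_
    filter_upwards [eventually_ge_atTop (max i 1)] with d hd
    have hdi : i ≤ d := le_trans (le_max_left _ _) hd
    have hd1 : (1:ℝ) ≤ d := by exact_mod_cast le_trans (le_max_right _ _) hd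
    rw [Nat.cast_sub hdi]
    field_simp
  have := tendsto_finset_prod (Finset.range j) h
  rw [Finset.prod_const_one] at this
  refine this.congr' ?_
  filter_upwards [eventually_ge_atTop 1] with d hd
  rw [Nat.descFactorial_eq_prod_range]
  push_cast
  rw [Finset.prod_div_distrib, Finset.prod_const]
  rw [Finset.card_range]

/-- **Almost sure pointwise convergence of the coupled rescaled Kostlan fields to the
Bargmann–Fock field.**
Let `γ_β ∼ N(0, 1_k)` be i.i.d. standard Gaussian vectors (all coordinates `γ_β^i`
independent standard Gaussians), and set
`X̃_d(u) = ∑_{|β| ≤ d} binom(d,β)^{1/2} γ_β (u/√d)^β` and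
`X̃_∞(u) = ∑_β (1/β!)^{1/2} γ_β u^β`, where
`binom(d,β) = d!/(β₁!⋯β_m!(d−|β|)!)`.
Then for every fixed `u` with `‖u‖ ≤ 1`, `X̃_d(u) → X̃_∞(u)` almost surely. -/
theorem stmt_19 {m k : ℕ} {Ω : Type*} [MeasureSpace Ω]
    [IsProbabilityMeasure (volume : Measure Ω)]
    (γ : (Fin m → ℕ) → Ω → Fin k → ℝ)
    (hmeas : ∀ β i, Measurable fun ω => γ β ω i)
    (hgauss : ∀ β i, Measure.map (fun ω => γ β ω i) volume = gaussianReal 0 1)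
    (hindep : iIndepFun
      (fun (p : (Fin m → ℕ) × Fin k) ω => γ p.1 ω p.2) volume)
    (Xd : ℕ → (Fin m → ℝ) → Ω → Fin k → ℝ)
    (hXd : ∀ d u ω i, Xd d u ω i =
      ∑ j ∈ Finset.range (d + 1),
        ∑ β ∈ Finset.piAntidiag (Finset.univ : Finset (Fin m)) j,
          Real.sqrt ((d.factorial : ℝ) /
              ((∏ l, ((β l).factorial : ℝ)) * ((d - j).factorial : ℝ))) *
            γ β ω i * ∏ l, (u l / Real.sqrt d) ^ β l)
    (Xinf : (Fin m → ℝ) → Ω → Fin k → ℝ)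
    (hXinf : ∀ u ω i, Xinf u ω i =
      ∑' β : Fin m → ℕ,
        Real.sqrt (1 / ∏ l, ((β l).factorial : ℝ)) * γ β ω i * ∏ l, u l ^ β l)
    (u : Fin m → ℝ) (hu : ‖u‖ ≤ 1) :
    ∀ᵐ ω ∂(volume : Measure Ω),
      Tendsto (fun d => Xd d u ω) atTop (nhds (Xinf u ω)) := by
  classical
  have hPpos : ∀ β : Fin m → ℕ, (0:ℝ) < ∏ l, ((β l).factorial : ℝ) :=
    fun β => Finset.prod_pos fun l _ => by exact_mod_cast (β l).factorial_pos
  set P : (Fin m → ℕ) → ℝ := fun β => ∏ l, ((β l).factorial : ℝ) with hPdef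
  set w : (Fin m → ℕ) → ℝ := fun β => Real.sqrt (1 / P β) with hwdef
  have hwnn : ∀ β, 0 ≤ w β := fun β => Real.sqrt_nonneg _
  have hwsum : Summable w := by
    refine (aux_summable_multi m).congr fun β => ?_
    rw [hwdef, hPdef]
    rw [← aux_sqrt_prod _ _ (fun l _ => by positivity)]
    congr 1
    rw [one_div, ← Finset.prod_inv_distrib]
    simp [one_div]
  -- the first absolute moment of the standard gaussian is finite
  have hC : ∫⁻ x, (‖x‖₊ : ENNReal) ∂(gaussianReal 0 1) < ⊤ := aux_gauss_int.hasFiniteIntegral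
  set C : ENNReal := ∫⁻ x, (‖x‖₊ : ENNReal) ∂(gaussianReal 0 1) with hCdef
  have hmeas2 : ∀ β i, Measurable (fun ω => ENNReal.ofReal (w β * |γ β ω i|)) :=
    fun β i => ((hmeas β i).abs.const_mul (w β)).ennreal_ofReal
  have hint : ∀ β i, ∫⁻ ω, ENNReal.ofReal (w β * |γ β ω i|) ∂volume
      = ENNReal.ofReal (w β) * C := by
    intro β i
    simp_rw [ENNReal.ofReal_mul (hwnn β)]
    rw [lintegral_const_mul _ ((hmeas β i).abs.ennreal_ofReal)]
    congr 1
    calc ∫⁻ ω, ENNReal.ofReal |γ β ω i| ∂volume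
        = ∫⁻ ω, (‖γ β ω i‖₊ : ENNReal) ∂volume := by
          simp_rw [← enorm_eq_nnnorm, Real.enorm_eq_ofReal_abs]
      _ = ∫⁻ x, (‖x‖₊ : ENNReal) ∂(Measure.map (fun ω => γ β ω i) volume) :=
          (lintegral_map measurable_nnnorm.coe_nnreal_ennreal (hmeas β i)).symm
      _ = C := by rw [hgauss β i]
  have hsum_ae : ∀ᵐ ω ∂(volume : Measure Ω), ∀ i, Summable fun β => w β * |γ β ω i| := by
    rw [ae_all_iff]
    intro i
    have hlt : ∫⁻ ω, ∑' β, ENNReal.ofReal (w β * |γ β ω i|) ∂volume ≠ ⊤ := by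
      rw [lintegral_tsum fun β => (hmeas2 β i).aemeasurable]
      simp_rw [hint]
      rw [ENNReal.tsum_mul_right]
      refine (ENNReal.mul_lt_top ?_ hC).ne
      rw [← ENNReal.ofReal_tsum_of_nonneg (fun β => hwnn β) hwsum]
      exact ENNReal.ofReal_lt_top
    filter_upwards [ae_lt_top (Measurable.ennreal_tsum fun β => hmeas2 β i) hlt] with ω hω
    refine (ENNReal.summable_toReal hω.ne).congr fun β => ?_
    rw [ENNReal.toReal_ofReal (by positivity)]
  filter_upwards [hsum_ae] with ω hω
  rw [tendsto_pi_nhds]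
  intro i
  set f : ℕ → (Fin m → ℕ) → ℝ := fun d β =>
    if (∑ l, β l) ≤ d then
      Real.sqrt ((d.factorial : ℝ) / (P β * ((d - ∑ l, β l).factorial : ℝ))) *
        γ β ω i * ∏ l, (u l / Real.sqrt d) ^ β l
    else 0 with hfdef
  set g : (Fin m → ℕ) → ℝ := fun β => w β * γ β ω i * ∏ l, u l ^ β l with hgdef
  -- rewriting the double sum as a tsum
  have hre : ∀ d, (∑' β, f d β) = Xd d u ω i := by
    intro d
    rw [hXd]
    have hT : ∀ β : Fin m → ℕ,
        β ∉ (Finset.range (d+1)).biUnion (fun j => Finset.piAntidiag Finset.univ j) →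
        f d β = 0 := by
      intro β hβ
      rw [Finset.mem_biUnion] at hβ
      push_neg at hβ
      have hnle : ¬ (∑ l, β l ≤ d) := fun hle =>
        hβ (∑ l, β l) (Finset.mem_range.mpr (Nat.lt_succ_of_le hle))
          (Finset.mem_piAntidiag.mpr ⟨rfl, fun _ _ => Finset.mem_univ _⟩)
      simp [hfdef, hnle]
    rw [tsum_eq_sum hT, Finset.sum_biUnion]
    · refine Finset.sum_congr rfl fun j hj => Finset.sum_congr rfl fun β hβ => ?_
      obtain ⟨hsum, -⟩ := Finset.mem_piAntidiag.mp hβ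
      have hle : ∑ l, β l ≤ d := by rw [hsum]; exact Nat.lt_succ_iff.mp (Finset.mem_range.mp hj)
      simp only [hfdef, if_pos hle, hsum, hPdef]
    · intro j1 h1 j2 h2 hne
      refine Finset.disjoint_left.mpr fun β hβ1 hβ2 => hne ?_
      obtain ⟨e1, -⟩ := Finset.mem_piAntidiag.mp hβ1
      obtain ⟨e2, -⟩ := Finset.mem_piAntidiag.mp hβ2
      rw [← e1, ← e2]
  have hXinfi : Xinf u ω i = ∑' β, g β := hXinf u ω i
  rw [hXinfi]
  refine Tendsto.congr hre ?_
  -- dominated convergence (Tannery)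
  refine tendsto_tsum_of_dominated_convergence (bound := fun β => w β * |γ β ω i|)
    (hω i) ?_ ?_
  · -- pointwise convergence of each coefficient
    intro β
    have hstep : ∀ᶠ d : ℕ in atTop, f d β =
        Real.sqrt ((1 / P β) * ((d.descFactorial (∑ l, β l) : ℝ) / (d:ℝ) ^ (∑ l, β l))) *
          γ β ω i * ∏ l, u l ^ β l := by
      filter_upwards [eventually_ge_atTop (max (∑ l, β l) 1)] with d hd
      have hjd : ∑ l, β l ≤ d := le_trans (le_max_left _ _) hd
      have hd1 : 1 ≤ d := le_trans (le_max_right _ _) hd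
      have hdpos : (0:ℝ) < d := by exact_mod_cast hd1
      simp only [hfdef, if_pos hjd]
      have hprod : ∏ l, (u l / Real.sqrt d) ^ β l
          = (∏ l, u l ^ β l) / (Real.sqrt d) ^ (∑ l, β l) := by
        simp_rw [div_pow]
        rw [Finset.prod_div_distrib, Finset.prod_pow_eq_pow_sum]
      rw [hprod]
      have hkey : Real.sqrt ((d.factorial : ℝ) / (P β * ((d - ∑ l, β l).factorial : ℝ)))
            / (Real.sqrt d) ^ (∑ l, β l)
          = Real.sqrt ((1 / P β) *
              ((d.descFactorial (∑ l, β l) : ℝ) / (d:ℝ) ^ (∑ l, β l))) := by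
        rw [← aux_sqrt_pow _ hdpos.le, ← Real.sqrt_div (by positivity)]
        congr 1
        have hdf : (d.factorial : ℝ)
            = ((d - ∑ l, β l).factorial : ℝ) * (d.descFactorial (∑ l, β l) : ℝ) := by
          exact_mod_cast (Nat.factorial_mul_descFactorial hjd).symm
        have hfne : ((d - ∑ l, β l).factorial : ℝ) ≠ 0 := by positivity
        have hPne : P β ≠ 0 := (hPpos β).ne'
        have hdne : ((d:ℝ)) ^ (∑ l, β l) ≠ 0 := by positivity
        rw [hdf]
        field_simp
      rw [← hkey]
      ring
    have hlim : Tendsto (fun d : ℕ =>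
        Real.sqrt ((1 / P β) * ((d.descFactorial (∑ l, β l) : ℝ) / (d:ℝ) ^ (∑ l, β l))) *
          γ β ω i * ∏ l, u l ^ β l) atTop (nhds (g β)) := by
      have h1 : Tendsto (fun d : ℕ =>
          (1 / P β) * ((d.descFactorial (∑ l, β l) : ℝ) / (d:ℝ) ^ (∑ l, β l)))
          atTop (nhds ((1 / P β) * 1)) :=
        (aux_coef_tendsto (∑ l, β l)).const_mul _
      have h2 := ((Real.continuous_sqrt.continuousAt.tendsto.comp h1).mul_const
        (γ β ω i)).mul_const (∏ l, u l ^ β l)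
      simpa [hgdef, hwdef, mul_one] using h2
    exact hlim.congr' (EventuallyEq.symm hstep)
  · -- uniform domination
    refine Eventually.of_forall fun d β => ?_
    simp only [hfdef]
    split_ifs with hle
    · rcases Nat.eq_zero_or_pos d with rfl | hdpos
      · have hβ0 : ∀ l, β l = 0 := by
          have h0 : ∑ l, β l = 0 := Nat.le_zero.mp hle
          intro l
          exact Finset.sum_eq_zero_iff.mp h0 l (Finset.mem_univ l)
        have hP1 : P β = 1 := by
          rw [hPdef]; simp [hβ0]
        simp [hβ0, hP1, hwdef, Real.norm_eq_abs, abs_mul, Nat.factorial]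
      · have hdR : (0:ℝ) < d := by exact_mod_cast hdpos
        have hsq : 0 < Real.sqrt d := Real.sqrt_pos.mpr hdR
        set A : ℝ := (d.factorial : ℝ) / (P β * ((d - ∑ l, β l).factorial : ℝ)) with hAdef
        have hA0 : 0 ≤ A := by positivity
        have hu1 : ∀ l, |u l| ≤ 1 := by
          intro l
          have := (pi_norm_le_iff_of_nonneg zero_le_one).mp hu l
          simpa [Real.norm_eq_abs] using this
        have habs : |∏ l, (u l / Real.sqrt d) ^ β l|
            = ∏ l, (|u l| / Real.sqrt d) ^ β l := by
          rw [Finset.abs_prod]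
          refine Finset.prod_congr rfl fun l _ => ?_
          rw [abs_pow, abs_div, abs_of_nonneg (Real.sqrt_nonneg _)]
        have hprodle : ∏ l, (|u l| / Real.sqrt d) ^ β l
            ≤ 1 / Real.sqrt ((d:ℝ) ^ (∑ l, β l)) := by
          have h1 : ∏ l, (|u l| / Real.sqrt d) ^ β l ≤ ∏ l, (1 / Real.sqrt d : ℝ) ^ β l := by
            refine Finset.prod_le_prod (fun l _ => by positivity) fun l _ => ?_
            gcongr
            exact hu1 l
          have h2 : ∏ l, (1 / Real.sqrt d : ℝ) ^ β l
              = 1 / Real.sqrt ((d:ℝ) ^ (∑ l, β l)) := by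
            rw [Finset.prod_pow_eq_pow_sum, aux_sqrt_pow _ hdR.le, div_pow, one_pow]
          rw [← h2]; exact h1
        have hmain : Real.sqrt A / Real.sqrt ((d:ℝ) ^ (∑ l, β l)) ≤ w β := by
          rw [hwdef, ← Real.sqrt_div hA0]
          apply Real.sqrt_le_sqrt
          rw [hAdef, div_div, div_le_div_iff₀ (by positivity) (hPpos β)]
          have hnat : (d.factorial : ℝ)
              ≤ ((d - ∑ l, β l).factorial : ℝ) * (d:ℝ) ^ (∑ l, β l) := by
            have h2 : d.factorial = (d - ∑ l, β l).factorial * d.descFactorial (∑ l, β l) :=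
              (Nat.factorial_mul_descFactorial hle).symm
            have h3 : d.descFactorial (∑ l, β l) ≤ d ^ (∑ l, β l) :=
              Nat.descFactorial_le_pow d _
            calc (d.factorial : ℝ)
                = ((d - ∑ l, β l).factorial : ℝ) * (d.descFactorial (∑ l, β l) : ℝ) := by
                  exact_mod_cast congrArg (Nat.cast : ℕ → ℝ) h2
              _ ≤ ((d - ∑ l, β l).factorial : ℝ) * (d:ℝ) ^ (∑ l, β l) := by
                  gcongr
                  exact_mod_cast h3
          nlinarith [hPpos β, hnat]
        calc ‖Real.sqrt A * γ β ω i * ∏ l, (u l / Real.sqrt d) ^ β l‖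
            = (Real.sqrt A * |∏ l, (u l / Real.sqrt d) ^ β l|) * |γ β ω i| := by
              rw [Real.norm_eq_abs, abs_mul, abs_mul, abs_of_nonneg (Real.sqrt_nonneg _)]
              ring
          _ ≤ (Real.sqrt A * (1 / Real.sqrt ((d:ℝ) ^ (∑ l, β l)))) * |γ β ω i| := by
              gcongr
              rw [habs]
              exact hprodle
          _ = (Real.sqrt A / Real.sqrt ((d:ℝ) ^ (∑ l, β l))) * |γ β ω i| := by ring
          _ ≤ w β * |γ β ω i| := by gcongr
    · simpa using by positivity
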